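/- Let 𝒜 be an abelian length category with length function ℓ, and let X, Y be indecomposable objects such that for every simple subobject X' ⊆ X and every simple subobject Y' ⊆ Y one has ℓ(X') < ℓ(Y'). Then ℓ*(X) > ℓ*(Y), where ℓ* is the Gabriel-Roiter measure with respect to ℓ. -/
import Mathlib


open CategoryTheory CategoryTheory.Limits

/-- The lexicographic order on finite chains (here: finite subsets of a linear order):
`X ≤ Y` iff `min (Y \ X) ≤ min (X \ Y)`, with the convention `max ∅ < x < min ∅`. -/
def lexLE {T : Type*} [PartialOrder T] [DecidableEq T] (X Y : Finset T) : Prop :=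
  X \ Y = ∅ ∨ ∃ b ∈ Y \ X, ∀ a ∈ X \ Y, b ≤ a

def lexLT {T : Type*} [PartialOrder T] [DecidableEq T] (X Y : Finset T) : Prop :=
  lexLE X Y ∧ ¬ lexLE Y X

universe v u

variable (C : Type u) [Category.{v} C] [Abelian C]

/-- The abelian category is a length category: every object is artinian and noetherian,
i.e. its subobject lattice satisfies both chain conditions (equivalently, every object
has a finite composition series). -/
def IsLengthCategory : Prop :=
  ∀ X : C, WellFoundedLT (Subobject X) ∧ WellFoundedGT (Subobject X)

variable {C}

/-- `X` is (isomorphic to) a subobject of `Y`. -/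
def SubOf (X Y : C) : Prop := ∃ f : X ⟶ Y, Mono f

/-- `X` is a proper subobject of `Y` (strict order on the poset of isoclasses of
indecomposables ordered by the subobject relation). -/
def StrictSubOf (X Y : C) : Prop := SubOf X Y ∧ ¬ SubOf Y X

/-- `X` is indecomposable: nonzero, and any biproduct decomposition has a zero summand. -/
def Indec (X : C) : Prop :=
  ¬ IsZero X ∧ ∀ A B : C, Nonempty (X ≅ A ⊞ B) → IsZero A ∨ IsZero B

/-- A length function on an abelian length category: real-valued, nonnegative, zero
exactly on zero objects, and additive on short exact sequences. -/
def IsLengthFunctionCat (l : C → ℝ) : Prop :=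
  (∀ X : C, 0 ≤ l X) ∧ (∀ X : C, l X = 0 ↔ IsZero X) ∧
  (∀ Sc : ShortComplex C, Sc.ShortExact → l Sc.X₂ = l Sc.X₁ + l Sc.X₃)

/-- `μ` is the Gabriel-Roiter measure `ℓ*` with respect to `l`: for each
indecomposable `X`, `μ X ∈ Ch(ℝ)` is the lexicographic maximum of the sets
`{l X₁, …, l Xₙ}` over all chains `X₁ ⊂ X₂ ⊂ ⋯ ⊂ Xₙ = X` of indecomposable
subobjects of `X`. -/
def IsGRMeasure (l : C → ℝ) (μ : C → Finset ℝ) : Prop :=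
  ∀ X : C, Indec X →
    (∃ (n : ℕ) (Z : Fin (n + 1) → C), (∀ i, Indec (Z i)) ∧
      (∀ i j : Fin (n + 1), i < j → StrictSubOf (Z i) (Z j)) ∧ Z (Fin.last n) = X ∧
      μ X = Finset.univ.image fun i => l (Z i)) ∧
    (∀ (n : ℕ) (Z : Fin (n + 1) → C), (∀ i, Indec (Z i)) →
      (∀ i j : Fin (n + 1), i < j → StrictSubOf (Z i) (Z j)) → Z (Fin.last n) = X →
      lexLE (Finset.univ.image fun i => l (Z i)) (μ X))

lemma subOf_length_le (l : C → ℝ) (hl : IsLengthFunctionCat l)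
    {A B : C} (hAB : SubOf A B) : l A ≤ l B := by
  obtain ⟨f, hf⟩ := hAB
  haveI := hf
  let Sc := ShortComplex.mk f (cokernel.π f) (by simp)
  have hse : Sc.ShortExact :=
    { exact := Sc.exact_of_g_is_cokernel (cokernelIsCokernel f)
      mono_f := hf
      epi_g := by dsimp [Sc]; infer_instance }
  have h1 := hl.2.2 Sc hse
  have h0 := hl.1 (cokernel f)
  dsimp [Sc] at h1
  linarith

lemma simple_indec {S : C} (hS : Simple S) : Indec S := by
  haveI := hS
  refine ⟨Simple.not_isZero S, fun A B ⟨e⟩ => ?_⟩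
  by_contra hc
  push_neg at hc
  obtain ⟨hA, hB⟩ := hc
  have hf : (biprod.inl ≫ e.inv : A ⟶ S) ≠ 0 := by
    intro h0
    apply hA
    rw [IsZero.iff_id_eq_zero]
    have : (biprod.inl : A ⟶ A ⊞ B) = 0 := by
      have := congrArg (· ≫ e.hom) h0
      simpa using this
    calc 𝟙 A = biprod.inl ≫ biprod.fst := by simp
    _ = 0 := by rw [this]; simp
  haveI : IsIso (biprod.inl ≫ e.inv : A ⟶ S) := isIso_of_mono_of_nonzero hf
  haveI : IsIso (biprod.inl : A ⟶ A ⊞ B) := by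
    have : (biprod.inl : A ⟶ A ⊞ B) = (biprod.inl ≫ e.inv) ≫ e.hom := by simp
    rw [this]; infer_instance
  apply hB
  rw [IsZero.iff_id_eq_zero]
  have hsnd : (biprod.snd : A ⊞ B ⟶ B) = 0 := by
    have h1 : (biprod.inl : A ⟶ A ⊞ B) ≫ biprod.snd = biprod.inl ≫ (0 : A ⊞ B ⟶ B) := by simp
    exact (cancel_epi (biprod.inl : A ⟶ A ⊞ B)).1 h1
  calc 𝟙 B = biprod.inr ≫ biprod.snd := by simp
  _ = 0 := by rw [hsnd]; simp

lemma exists_simple_sub (X : C) [WellFoundedLT (Subobject X)] (hX : ¬ IsZero X) :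
    ∃ S : C, Simple S ∧ SubOf S X := by
  haveI : IsAtomic (Subobject X) :=
    isAtomic_of_orderBot_wellFounded_lt (wellFounded_lt (α := Subobject X))
  rcases (IsAtomic.eq_bot_or_exists_atom_le (⊤ : Subobject X)) with htop | ⟨a, ha, _⟩
  · exfalso
    apply hX
    have : IsIso (⊥ : Subobject X).arrow := by
      rw [← htop]; infer_instance
    have e : ((⊥ : Subobject X) : C) ≅ X := asIso (⊥ : Subobject X).arrow
    exact IsZero.of_iso (IsZero.of_iso (isZero_zero C) Subobject.botCoeIsoZero) e.symm
  · exact ⟨(a : C), (subobject_simple_iff_isAtom a).2 ha, a.arrow, inferInstance⟩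

/-- If every simple subobject of `X` has strictly smaller length than every simple
subobject of `Y`, then `ℓ*(X) > ℓ*(Y)`. -/
theorem gr_socle_comparison {C : Type u} [Category.{v} C] [Abelian C]
    (hC : IsLengthCategory C) (l : C → ℝ) (hl : IsLengthFunctionCat l)
    (μ : C → Finset ℝ) (hμ : IsGRMeasure l μ)
    (X Y : C) (hX : Indec X) (hY : Indec Y)
    (h : ∀ X' Y' : C, Simple X' → SubOf X' X → Simple Y' → SubOf Y' Y → l X' < l Y') :
    lexLT (μ Y) (μ X) := by
  classical
  obtain ⟨⟨nX, ZX, hZXindec, hZXchain, hZXlast, hμX⟩, hmaxX⟩ := hμ X hX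
  obtain ⟨⟨nY, ZY, hZYindec, hZYchain, hZYlast, hμY⟩, hmaxY⟩ := hμ Y hY
  have hlXmem : l X ∈ μ X := by
    rw [hμX]
    exact Finset.mem_image.2 ⟨Fin.last nX, Finset.mem_univ _, by rw [hZXlast]⟩
  haveI := (hC X).1
  obtain ⟨S, hSsimple, hSsub⟩ := exists_simple_sub X hX.1
  -- there is an element of μ X of size at most l S
  have hkey : ∃ m ∈ μ X, m ≤ l S := by
    by_cases hXS : SubOf X S
    · exact ⟨l X, hlXmem, subOf_length_le l hl hXS⟩
    · set Z : Fin (1 + 1) → C := ![S, X] with hZdef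
      have hind : ∀ i, Indec (Z i) := by
        intro i
        fin_cases i
        · exact simple_indec hSsimple
        · exact hX
      have hchain : ∀ i j : Fin (1 + 1), i < j → StrictSubOf (Z i) (Z j) := by
        intro i j hij
        fin_cases i <;> fin_cases j
        · exact absurd hij (by decide)
        · exact ⟨hSsub, hXS⟩
        · exact absurd hij (by decide)
        · exact absurd hij (by decide)
      have hlast : Z (Fin.last 1) = X := rfl
      have hle := hmaxX 1 Z hind hchain hlast
      have hSin : l S ∈ Finset.univ.image fun i => l (Z i) :=
        Finset.mem_image.2 ⟨0, Finset.mem_univ _, rfl⟩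
      rcases hle with hemp | ⟨b, hb, hball⟩
      · refine ⟨l S, ?_, le_refl _⟩
        exact Finset.sdiff_eq_empty_iff_subset.1 hemp hSin
      · by_cases hSX : l S ∈ μ X
        · exact ⟨l S, hSX, le_refl _⟩
        · refine ⟨b, (Finset.mem_sdiff.1 hb).1, ?_⟩
          exact hball (l S) (Finset.mem_sdiff.2 ⟨hSin, hSX⟩)
  -- every element of μ Y exceeds l S
  have hYbig : ∀ y ∈ μ Y, l S < y := by
    intro y hy
    rw [hμY] at hy
    obtain ⟨j, -, rfl⟩ := Finset.mem_image.1 hy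
    have hsubY : SubOf (ZY j) Y := by
      rcases eq_or_lt_of_le (Fin.le_last j) with hj | hj
      · rw [hj, hZYlast]; exact ⟨𝟙 Y, inferInstance⟩
      · have := (hZYchain j (Fin.last nY) hj).1
        rwa [hZYlast] at this
    haveI := (hC (ZY j)).1
    obtain ⟨T, hTsimple, hTsub⟩ := exists_simple_sub (ZY j) (hZYindec j).1
    have hTY : SubOf T Y := by
      obtain ⟨g, hg⟩ := hTsub
      obtain ⟨f, hf⟩ := hsubY
      haveI := hg; haveI := hf
      exact ⟨g ≫ f, mono_comp g f⟩
    have h1 : l S < l T := h S T hSsimple hSsub hTsimple hTY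
    have h2 : l T ≤ l (ZY j) := subOf_length_le l hl hTsub
    linarith
  obtain ⟨m, hm, hmS⟩ := hkey
  have hmlt : ∀ y ∈ μ Y, m < y := fun y hy => lt_of_le_of_lt hmS (hYbig y hy)
  have hmnot : m ∉ μ Y := fun hmem => lt_irrefl m (hmlt m hmem)
  constructor
  · right
    exact ⟨m, Finset.mem_sdiff.2 ⟨hm, hmnot⟩,
      fun a ha => le_of_lt (hmlt a (Finset.mem_sdiff.1 ha).1)⟩
  · rintro (hemp | ⟨b, hb, hball⟩)
    · exact hmnot (Finset.sdiff_eq_empty_iff_subset.1 hemp hm)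
    · have hbY := (Finset.mem_sdiff.1 hb).1
      have h1 : b ≤ m := hball m (Finset.mem_sdiff.2 ⟨hm, hmnot⟩)
      exact absurd (hmlt b hbY) (not_lt.2 h1)
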